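/- The cover pebbling number of hypercubes is multiplicative over Cartesian products: for all nonnegative integers a and b, γ(Q^{a+b}) = γ(Q^a) · γ(Q^b); in particular the cover pebbling analogue of Graham's conjecture, γ(G □ H) ≤ γ(G)·γ(H), holds when G and H are hypercubes. -/

import Mathlib

open Finset

/-- A pebbling step on graph `G`: remove two pebbles from a vertex `u`,
place one pebble on an adjacent vertex `v`. -/
def PebbleStep {V : Type*} (G : SimpleGraph V) (C C' : V → ℕ) : Prop :=
  ∃ u v : V, G.Adj u v ∧ 2 ≤ C u ∧ C' u = C u - 2 ∧ C' v = C v + 1 ∧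
    ∀ x : V, x ≠ u → x ≠ v → C' x = C x

/-- A configuration is coverable if after some sequence of pebbling steps
every vertex has at least one pebble. -/
def Coverable {V : Type*} (G : SimpleGraph V) (C : V → ℕ) : Prop :=
  ∃ C' : V → ℕ, Relation.ReflTransGen (PebbleStep G) C C' ∧ ∀ v : V, 1 ≤ C' v

/-- The `d`-dimensional hypercube: vertices are binary `d`-tuples, adjacent
exactly when they differ in one coordinate. -/
def cube (d : ℕ) : SimpleGraph (Fin d → Bool) where
  Adj x y := hammingDist x y = 1
  symm := ⟨fun x y h => by rwa [hammingDist_comm]⟩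
  loopless := ⟨fun x h => by simp [hammingDist_self] at h⟩

/-- The cover pebbling number: the minimum `m` such that every configuration
of size `m` on `G` is coverable. -/
noncomputable def coverPebblingNumber {V : Type*} [Fintype V] (G : SimpleGraph V) : ℕ :=
  sInf {m : ℕ | ∀ C : V → ℕ, (∑ v, C v) = m → Coverable G C}

/-- The pebbling number: the minimum `m` such that from every configuration of
size `m` and for every target vertex, some sequence of pebbling steps places a
pebble on the target. -/
noncomputable def pebblingNumber {V : Type*} [Fintype V] (G : SimpleGraph V) : ℕ :=
  sInf {m : ℕ | ∀ (C : V → ℕ) (t : V), (∑ v, C v) = m →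
    ∃ C' : V → ℕ, Relation.ReflTransGen (PebbleStep G) C C' ∧ 1 ≤ C' t}

section Generic

variable {V : Type*} {G : SimpleGraph V}

lemma rtg_mono {C'' D'' : V → ℕ} [DecidableEq V]
    (h : Relation.ReflTransGen (PebbleStep G) C'' D'') :
    ∀ C : V → ℕ, (∀ v, C'' v ≤ C v) →
      ∃ D : V → ℕ, (∀ v, D'' v ≤ D v) ∧ Relation.ReflTransGen (PebbleStep G) C D := by
  induction h with
  | refl => exact fun C hC => ⟨C, hC, .refl⟩
  | tail _ hstep ih =>
    rename_i b c _
    intro C hC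
    obtain ⟨D, hD, hr⟩ := ih C hC
    obtain ⟨u, v, hadj, h2, hu, hv, hother⟩ := hstep
    have huv : u ≠ v := hadj.ne
    refine ⟨fun x => if x = u then D u - 2 else if x = v then D v + 1 else D x,
      ?_, hr.tail ⟨u, v, hadj, le_trans h2 (hD u), by simp [huv], by simp [huv, Ne.symm huv], ?_⟩⟩
    · intro x
      by_cases hx : x = u
      · subst hx; simp only [hu, if_pos rfl, ite_true]; have := hD x; omega
      · by_cases hx' : x = v
        · subst hx'; simp only [hv, if_neg hx, if_pos rfl, ite_true]; have := hD x; omega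
        · simp only [if_neg hx, if_neg hx', hother x hx hx']; exact hD x
    · intro x hx hx'; simp [hx, hx']

lemma coverable_mono [DecidableEq V] {C'' C : V → ℕ} (h : Coverable G C'')
    (hle : ∀ v, C'' v ≤ C v) : Coverable G C := by
  obtain ⟨D'', hr, h1⟩ := h
  obtain ⟨D, hD, hr'⟩ := rtg_mono hr C hle
  exact ⟨D, hr', fun v => le_trans (h1 v) (hD v)⟩

lemma exists_le_sum [Fintype V] [DecidableEq V] (f : V → ℕ) (m : ℕ) (h : m ≤ ∑ v, f v) :
    ∃ g : V → ℕ, (∀ v, g v ≤ f v) ∧ ∑ v, g v = m := by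
  obtain ⟨k, hk⟩ := Nat.exists_eq_add_of_le h
  clear h
  induction k generalizing f with
  | zero => exact ⟨f, fun v => le_rfl, by omega⟩
  | succ k ih =>
    have hpos : 0 < ∑ v, f v := by omega
    have : ∃ v, 0 < f v := by
      by_contra hc
      push_neg at hc
      simp only [Nat.le_zero] at hc
      rw [Finset.sum_eq_zero (fun v _ => hc v)] at hpos
      omega
    obtain ⟨v0, hv0⟩ := this
    set f' : V → ℕ := Function.update f v0 (f v0 - 1) with hf'
    have hsum' : ∑ v, f' v = m + k := by
      have h1 : ∑ v, f v = f v0 + ∑ v ∈ univ.erase v0, f v :=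
        (Finset.add_sum_erase _ f (mem_univ v0)).symm
      have h2 : ∑ v, f' v = f' v0 + ∑ v ∈ univ.erase v0, f' v :=
        (Finset.add_sum_erase _ f' (mem_univ v0)).symm
      have h3 : ∑ v ∈ univ.erase v0, f' v = ∑ v ∈ univ.erase v0, f v :=
        Finset.sum_congr rfl (fun v hv => by
          simp [hf', Function.update_of_ne (Finset.ne_of_mem_erase hv)])
      have h4 : f' v0 = f v0 - 1 := by simp [hf']
      omega
    obtain ⟨g, hg, hgs⟩ := ih f' hsum'
    refine ⟨g, fun v => le_trans (hg v) ?_, hgs⟩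
    by_cases hv : v = v0
    · subst hv; simp [hf']
    · simp [hf', Function.update_of_ne hv]

lemma pebbleStep_map {W : Type*} {G' : SimpleGraph W} (e : G ≃g G') {C C' : V → ℕ}
    (h : PebbleStep G C C') : PebbleStep G' (C ∘ e.symm) (C' ∘ e.symm) := by
  obtain ⟨u, v, hadj, h2, hu, hv, hother⟩ := h
  refine ⟨e u, e v, by rwa [e.map_adj_iff], by simpa using h2, by simpa using hu,
    by simpa using hv, ?_⟩
  intro x hx hx'
  have h1 : e.symm x ≠ u := fun hc => hx (by rw [← hc, e.apply_symm_apply])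
  have h2' : e.symm x ≠ v := fun hc => hx' (by rw [← hc, e.apply_symm_apply])
  simpa using hother _ h1 h2'

lemma rtg_map {W : Type*} {G' : SimpleGraph W} (e : G ≃g G') {C C' : V → ℕ}
    (hr : Relation.ReflTransGen (PebbleStep G) C C') :
    Relation.ReflTransGen (PebbleStep G') (C ∘ e.symm) (C' ∘ e.symm) := by
  induction hr with
  | refl => exact .refl
  | tail _ hstep ih => exact ih.tail (pebbleStep_map e hstep)

lemma coverable_map {W : Type*} {G' : SimpleGraph W} (e : G ≃g G') {C : V → ℕ}
    (h : Coverable G C) : Coverable G' (C ∘ e.symm) := by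
  obtain ⟨C', hr, h1⟩ := h
  exact ⟨C' ∘ e.symm, rtg_map e hr, fun w => h1 _⟩

lemma coverPebblingNumber_congr {W : Type*} [Fintype V] [Fintype W] {G' : SimpleGraph W}
    (e : G ≃g G') : coverPebblingNumber G = coverPebblingNumber G' := by
  unfold coverPebblingNumber
  congr 1
  ext m
  simp only [Set.mem_setOf_eq]
  constructor
  · intro h C hsum
    have h1 : (∑ v, (C ∘ e) v) = m := by
      rw [← hsum]; exact Equiv.sum_comp e.toEquiv C
    have := coverable_map e (h (C ∘ e) h1)
    convert this using 1
    funext x; simp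
  · intro h C hsum
    have h1 : (∑ v, (C ∘ e.symm) v) = m := by
      rw [← hsum]; exact Equiv.sum_comp e.symm.toEquiv C
    have := coverable_map e.symm (h (C ∘ e.symm) h1)
    convert this using 1
    funext x; simp

end Generic
section Product

open SimpleGraph

variable {V : Type*} [Fintype V] [DecidableEq V] (G : SimpleGraph V)

def Kbool : SimpleGraph Bool where
  Adj x y := x ≠ y
  symm := ⟨fun x y h => h.symm⟩
  loopless := ⟨fun x h => h rfl⟩

def pslice (b : Bool) (A B : V → ℕ) : V × Bool → ℕ :=
  fun p => if p.2 = b then A p.1 else B p.1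

variable {G}

lemma lift_slice (b : Bool) {A A' : V → ℕ}
    (h : Relation.ReflTransGen (PebbleStep G) A A') (B : V → ℕ) :
    Relation.ReflTransGen (PebbleStep (G □ Kbool)) (pslice b A B) (pslice b A' B) := by
  induction h with
  | refl => exact .refl
  | tail _ hstep ih =>
    rename_i A1 A2 _
    obtain ⟨u, v, hadj, h2, hu, hv, hother⟩ := hstep
    refine ih.tail ⟨(u, b), (v, b), ?_, ?_, ?_, ?_, ?_⟩
    · exact SimpleGraph.boxProd_adj.2 (Or.inl ⟨hadj, rfl⟩)
    · simpa [pslice] using h2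
    · simp [pslice, hu]
    · simp [pslice, hv]
    · rintro ⟨w, c⟩ hw hw'
      by_cases hc : c = b
      · subst hc
        have h1 : w ≠ u := fun h => hw (by rw [h])
        have h2' : w ≠ v := fun h => hw' (by rw [h])
        simp [pslice, hother w h1 h2']
      · simp [pslice, hc]

lemma transfer (n : ℕ) : ∀ (C : V × Bool → ℕ) (e : V → ℕ), (∑ v, e v) = n →
    (∀ v, 2 * e v ≤ C (v, false)) →
    Relation.ReflTransGen (PebbleStep (G □ Kbool)) C
      (pslice false (fun v => C (v, false) - 2 * e v) (fun v => C (v, true) + e v)) := by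
  induction n with
  | zero =>
    intro C e hsum he
    have hz : ∀ v, e v = 0 := by
      intro v
      have := Finset.sum_eq_zero_iff.1 hsum v (Finset.mem_univ v)
      exact this
    have : pslice false (fun v => C (v, false) - 2 * e v) (fun v => C (v, true) + e v) = C := by
      funext p
      obtain ⟨v, b⟩ := p
      cases b <;> simp [pslice, hz]
    rw [this]
  | succ n ih =>
    intro C e hsum he
    have : ∃ v, 0 < e v := by
      by_contra hc
      push_neg at hc
      simp only [Nat.le_zero] at hc
      rw [Finset.sum_eq_zero (fun v _ => hc v)] at hsum
      omega
    obtain ⟨v0, hv0⟩ := this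
    have h2 : 2 ≤ C (v0, false) := le_trans (by omega) (he v0)
    set C₁ : V × Bool → ℕ := fun p =>
      if p = (v0, false) then C (v0, false) - 2
      else if p = (v0, true) then C (v0, true) + 1 else C p with hC₁
    have hstep : PebbleStep (G □ Kbool) C C₁ := by
      refine ⟨(v0, false), (v0, true), ?_, h2, ?_, ?_, ?_⟩
      · exact SimpleGraph.boxProd_adj.2 (Or.inr ⟨by simp [Kbool], rfl⟩)
      · simp [hC₁]
      · simp [hC₁]
      · intro x hx hx'; simp [hC₁, hx, hx']
    set e' : V → ℕ := Function.update e v0 (e v0 - 1) with he'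
    have hsum' : ∑ v, e' v = n := by
      have h1 : ∑ v, e v = e v0 + ∑ v ∈ Finset.univ.erase v0, e v :=
        (Finset.add_sum_erase _ e (Finset.mem_univ v0)).symm
      have hh2 : ∑ v, e' v = e' v0 + ∑ v ∈ Finset.univ.erase v0, e' v :=
        (Finset.add_sum_erase _ e' (Finset.mem_univ v0)).symm
      have h3 : ∑ v ∈ Finset.univ.erase v0, e' v = ∑ v ∈ Finset.univ.erase v0, e v :=
        Finset.sum_congr rfl (fun v hv => by
          simp [he', Function.update_of_ne (Finset.ne_of_mem_erase hv)])
      have h4 : e' v0 = e v0 - 1 := by simp [he']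
      omega
    have he2 : ∀ v, 2 * e' v ≤ C₁ (v, false) := by
      intro v
      by_cases hv : v = v0
      · subst hv
        have : C₁ (v, false) = C (v, false) - 2 := by simp [hC₁]
        rw [this]
        have h5 : e' v = e v - 1 := by simp [he']
        have := he v
        omega
      · have hne1 : (v, false) ≠ (v0, false) := by simp [hv]
        have hne2 : (v, false) ≠ (v0, true) := by simp
        have : C₁ (v, false) = C (v, false) := by simp [hC₁, hne1, hne2]
        rw [this, he', Function.update_of_ne hv]
        exact he v
    have hmain := ih C₁ e' hsum' he2
    have heq : pslice false (fun v => C₁ (v, false) - 2 * e' v) (fun v => C₁ (v, true) + e' v)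
        = pslice false (fun v => C (v, false) - 2 * e v) (fun v => C (v, true) + e v) := by
      funext p
      obtain ⟨v, b⟩ := p
      by_cases hv : v = v0
      · subst hv
        cases b
        · have h5 : C₁ (v, false) = C (v, false) - 2 := by simp [hC₁]
          have h6 : e' v = e v - 1 := by simp [he']
          have := he v
          simp only [pslice, h5, h6]
          norm_num
          omega
        · have h5 : C₁ (v, true) = C (v, true) + 1 := by simp [hC₁]
          have h6 : e' v = e v - 1 := by simp [he']
          simp only [pslice, h5, h6]
          norm_num
          omega
      · have hne1 : (v, false) ≠ (v0, false) := by simp [hv]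
        have hne2 : (v, false) ≠ (v0, true) := by simp
        have hne3 : (v, true) ≠ (v0, false) := by simp
        have hne4 : (v, true) ≠ (v0, true) := by simp [hv]
        have h5 : C₁ (v, false) = C (v, false) := by simp [hC₁, hne1, hne2]
        have h6 : C₁ (v, true) = C (v, true) := by simp [hC₁, hne3, hne4]
        have h7 : e' v = e v := by rw [he', Function.update_of_ne hv]
        cases b <;> simp only [pslice, h5, h6, h7]
    rw [heq] at hmain
    exact Relation.ReflTransGen.head hstep hmain

end Product
section Half

open SimpleGraph

variable {V : Type*} [Fintype V] [DecidableEq V] {G : SimpleGraph V}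

lemma half_cover (N : ℕ) (hcard : Fintype.card V ≤ N)
    (hcov : ∀ A : V → ℕ, N ≤ ∑ v, A v → Coverable G A)
    (C : V × Bool → ℕ) (hS : 3 * N ≤ ∑ p, C p)
    (hle : ∑ v, C (v, true) ≤ ∑ v, C (v, false)) :
    Coverable (G □ Kbool) C := by
  set s0 := ∑ v, C (v, false) with hs0
  set s1 := ∑ v, C (v, true) with hs1
  have hsum : ∑ p, C p = s1 + s0 := by
    rw [Fintype.sum_prod_type]
    simp only [Fintype.sum_bool]
    rw [Finset.sum_add_distrib]
  set X := N - s1 with hX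
  -- choose the export plan e
  have hdiv : ∀ v : V, C (v, false) ≤ 2 * (C (v, false) / 2) + 1 := by
    intro v; omega
  have hsf : s0 ≤ 2 * (∑ v, C (v, false) / 2) + Fintype.card V := by
    calc s0 ≤ ∑ v, (2 * (C (v, false) / 2) + 1) := Finset.sum_le_sum (fun v _ => hdiv v)
    _ = 2 * (∑ v, C (v, false) / 2) + Fintype.card V := by
        rw [Finset.sum_add_distrib, ← Finset.mul_sum]
        simp [Finset.card_univ]
  have hXe : X ≤ ∑ v, C (v, false) / 2 := by omega
  obtain ⟨e, he_le, he_sum⟩ := exists_le_sum (fun v => C (v, false) / 2) X hXe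
  have he2 : ∀ v, 2 * e v ≤ C (v, false) := by
    intro v
    have := (Nat.le_div_iff_mul_le (by norm_num : (0:ℕ) < 2)).1 (he_le v)
    omega
  -- phase 1 : transfer X pebbles across
  have t1 := transfer (G := G) X C e he_sum he2
  set D0 : V → ℕ := fun v => C (v, false) - 2 * e v with hD0
  set D1 : V → ℕ := fun v => C (v, true) + e v with hD1
  have hD0sum : ∑ v, D0 v + 2 * X = s0 := by
    have : ∑ v, (D0 v + 2 * e v) = s0 := by
      refine Finset.sum_congr rfl (fun v _ => ?_)
      have := he2 v
      simp only [hD0]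
      omega
    rw [Finset.sum_add_distrib, ← Finset.mul_sum, he_sum] at this
    exact this
  have hD1sum : ∑ v, D1 v = s1 + X := by
    simp only [hD1]
    rw [Finset.sum_add_distrib, he_sum]
  -- phase 2 : cover the false half
  have hND0 : N ≤ ∑ v, D0 v := by omega
  obtain ⟨A', hA'r, hA'1⟩ := hcov D0 hND0
  have t2 := lift_slice (G := G) false hA'r D1
  -- phase 3 : cover the true half
  have hND1 : N ≤ ∑ v, D1 v := by omega
  obtain ⟨B', hB'r, hB'1⟩ := hcov D1 hND1
  have t4 := lift_slice (G := G) true hB'r A'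
  have t3 : pslice false A' D1 = pslice true D1 A' := by
    funext p
    obtain ⟨v, b⟩ := p
    cases b <;> simp [pslice]
  rw [t3] at t2
  refine ⟨pslice true B' A', (t1.trans t2).trans t4, ?_⟩
  rintro ⟨v, b⟩
  cases b
  · simpa [pslice] using hA'1 v
  · simpa [pslice] using hB'1 v

def swapIso (G : SimpleGraph V) : (G □ Kbool) ≃g (G □ Kbool) where
  toEquiv := (Equiv.refl V).prodCongr (Function.Involutive.toPerm not Bool.not_not)
  map_rel_iff' := by
    rintro ⟨u, b⟩ ⟨v, c⟩
    simp only [Equiv.prodCongr_apply, Equiv.coe_refl, Prod.map_apply, id_eq,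
      SimpleGraph.boxProd_adj]
    cases b <;> cases c <;> simp [Kbool, Function.Involutive.toPerm]

lemma prod_cover (N : ℕ) (hcard : Fintype.card V ≤ N)
    (hcov : ∀ A : V → ℕ, N ≤ ∑ v, A v → Coverable G A)
    (C : V × Bool → ℕ) (hS : 3 * N ≤ ∑ p, C p) :
    Coverable (G □ Kbool) C := by
  rcases le_or_gt (∑ v, C (v, true)) (∑ v, C (v, false)) with h | h
  · exact half_cover N hcard hcov C hS h
  · set C2 : V × Bool → ℕ := fun p => C (p.1, !p.2) with hC2
    have hsum2 : ∑ p, C2 p = ∑ p, C p := by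
      have := Equiv.sum_comp (swapIso G).toEquiv C
      calc ∑ p, C2 p = ∑ p : V × Bool, C ((swapIso G).toEquiv p) := by
            refine Finset.sum_congr rfl (fun p _ => ?_)
            obtain ⟨v, b⟩ := p
            simp [hC2, swapIso, Function.Involutive.toPerm]
      _ = ∑ p, C p := this
    have hcov2 : Coverable (G □ Kbool) C2 := by
      refine half_cover N hcard hcov C2 (by rw [hsum2]; exact hS) ?_
      have h1 : ∀ v, C2 (v, true) = C (v, false) := fun v => rfl
      have h2 : ∀ v, C2 (v, false) = C (v, true) := fun v => rfl
      simp only [h1, h2]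
      exact h.le
    have := coverable_map (swapIso G) hcov2
    have hCe : C2 ∘ ⇑(swapIso G).symm = C := by
      funext p; obtain ⟨v, b⟩ := p; cases b <;> rfl
    rwa [hCe] at this

end Half
section Cube

open SimpleGraph

lemma hd_sum {ι : Type*} [Fintype ι] (x y : ι → Bool) :
    hammingDist x y = ∑ i, if x i = y i then 0 else 1 := by
  rw [hammingDist, Finset.card_filter]
  exact Finset.sum_congr rfl (fun i _ => by by_cases h : x i = y i <;> simp [h])

lemma hamming_succ {d : ℕ} (x y : Fin (d + 1) → Bool) :
    hammingDist x y = (if x 0 = y 0 then 0 else 1) + hammingDist (Fin.tail x) (Fin.tail y) := by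
  rw [hd_sum, Fin.sum_univ_succ, hd_sum]
  rfl

/-- `cube (d+1)` is isomorphic to `cube d □ Kbool`. -/
def cubeSuccIso (d : ℕ) : cube (d + 1) ≃g (cube d □ Kbool) where
  toEquiv :=
    { toFun := fun x => (Fin.tail x, x 0)
      invFun := fun p => Fin.cons p.2 p.1
      left_inv := fun x => Fin.cons_self_tail x
      right_inv := fun p => by
        obtain ⟨xs, b⟩ := p
        simp [Fin.tail_cons] }
  map_rel_iff' := by
    intro x y
    show (cube d □ Kbool).Adj (Fin.tail x, x 0) (Fin.tail y, y 0) ↔ (cube (d+1)).Adj x y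
    rw [SimpleGraph.boxProd_adj]
    show (cube d).Adj (Fin.tail x) (Fin.tail y) ∧ x 0 = y 0 ∨
        (Kbool.Adj (x 0) (y 0) ∧ Fin.tail x = Fin.tail y) ↔ (cube (d+1)).Adj x y
    have h1 : (cube (d+1)).Adj x y ↔ hammingDist x y = 1 := Iff.rfl
    have h2 : (cube d).Adj (Fin.tail x) (Fin.tail y) ↔
        hammingDist (Fin.tail x) (Fin.tail y) = 1 := Iff.rfl
    have h3 : Kbool.Adj (x 0) (y 0) ↔ x 0 ≠ y 0 := Iff.rfl
    rw [h1, h2, h3, hamming_succ x y, ← hammingDist_eq_zero (x := Fin.tail x)]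
    by_cases h0 : x 0 = y 0 <;> simp [h0] <;> omega

/-- `cube a □ cube b` is isomorphic to `cube (a+b)`. -/
def cubeAddIso (a b : ℕ) : (cube a □ cube b) ≃g cube (a + b) where
  toEquiv :=
    { toFun := fun p => fun i => Sum.elim p.1 p.2 (finSumFinEquiv.symm i)
      invFun := fun x => (fun i => x (finSumFinEquiv (Sum.inl i)),
        fun j => x (finSumFinEquiv (Sum.inr j)))
      left_inv := fun p => by
        obtain ⟨x, y⟩ := p
        simp
      right_inv := fun x => by
        funext i
        simp only
        rcases h : finSumFinEquiv.symm i with s | s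
        · have hi : i = finSumFinEquiv (Sum.inl s) := by rw [← h, Equiv.apply_symm_apply]
          rw [hi]; simp
        · have hi : i = finSumFinEquiv (Sum.inr s) := by rw [← h, Equiv.apply_symm_apply]
          rw [hi]; simp }
  map_rel_iff' := by
    intro p q
    have key : hammingDist (fun i => Sum.elim p.1 p.2 (finSumFinEquiv.symm i))
        (fun i => Sum.elim q.1 q.2 (finSumFinEquiv.symm i))
        = hammingDist p.1 q.1 + hammingDist p.2 q.2 := by
      rw [hd_sum, ← Equiv.sum_comp finSumFinEquiv
        (fun i => if Sum.elim p.1 p.2 (finSumFinEquiv.symm i)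
          = Sum.elim q.1 q.2 (finSumFinEquiv.symm i) then 0 else 1),
        Fintype.sum_sum_type]
      simp only [Equiv.symm_apply_apply, Sum.elim_inl, Sum.elim_inr]
      rw [hd_sum p.1 q.1, hd_sum p.2 q.2]
    show (cube (a+b)).Adj (fun i => Sum.elim p.1 p.2 (finSumFinEquiv.symm i))
        (fun i => Sum.elim q.1 q.2 (finSumFinEquiv.symm i)) ↔ (cube a □ cube b).Adj p q
    rw [SimpleGraph.boxProd_adj]
    have h1 : (cube (a+b)).Adj (fun i => Sum.elim p.1 p.2 (finSumFinEquiv.symm i))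
        (fun i => Sum.elim q.1 q.2 (finSumFinEquiv.symm i)) ↔
        hammingDist p.1 q.1 + hammingDist p.2 q.2 = 1 := by
      show hammingDist _ _ = 1 ↔ _
      rw [key]
    rw [h1]
    show _ ↔ (cube a).Adj p.1 q.1 ∧ p.2 = q.2 ∨ (cube b).Adj p.2 q.2 ∧ p.1 = q.1
    have h2 : (cube a).Adj p.1 q.1 ↔ hammingDist p.1 q.1 = 1 := Iff.rfl
    have h3 : (cube b).Adj p.2 q.2 ↔ hammingDist p.2 q.2 = 1 := Iff.rfl
    rw [h2, h3, ← hammingDist_eq_zero (x := p.1), ← hammingDist_eq_zero (x := p.2)]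
    omega

lemma sum_pow_hamming (d : ℕ) :
    ∑ v : Fin d → Bool, 2 ^ hammingDist v (fun _ => false) = 3 ^ d := by
  induction d with
  | zero =>
    have h1 : ∀ v : Fin 0 → Bool, hammingDist v (fun _ => false) = 0 := by
      intro v; rw [hd_sum]; simp
    simp [h1]
  | succ d ih =>
    rw [← Equiv.sum_comp (Fin.consEquiv (fun _ : Fin (d+1) => Bool))
      (fun v => 2 ^ hammingDist v (fun _ => false)), Fintype.sum_prod_type,
      Fintype.sum_bool]
    have key : ∀ (b : Bool) (xs : Fin d → Bool),
        hammingDist (Fin.consEquiv (fun _ : Fin (d+1) => Bool) (b, xs)) (fun _ => false)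
        = (if b = false then 0 else 1) + hammingDist xs (fun _ => false) := by
      intro b xs
      have h0 : Fin.tail (fun _ : Fin (d+1) => false) = (fun _ : Fin d => false) := rfl
      rw [hamming_succ, h0]
      simp [Fin.consEquiv, Fin.cons_zero, Fin.tail_cons]
    have hT : ∑ xs : Fin d → Bool,
        2 ^ hammingDist (Fin.consEquiv (fun _ : Fin (d+1) => Bool) (true, xs)) (fun _ => false)
        = 2 * 3 ^ d := by
      rw [← ih, Finset.mul_sum]
      refine Finset.sum_congr rfl (fun xs _ => ?_)
      rw [key true xs]
      simp [pow_add]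
    have hF : ∑ xs : Fin d → Bool,
        2 ^ hammingDist (Fin.consEquiv (fun _ : Fin (d+1) => Bool) (false, xs)) (fun _ => false)
        = 3 ^ d := by
      rw [← ih]
      refine Finset.sum_congr rfl (fun xs _ => ?_)
      rw [key false xs]
      simp
    rw [hT, hF, pow_succ]
    ring

end Cube
section Main

open SimpleGraph

lemma potential_step {d : ℕ} (z : Fin d → Bool) {C C' : (Fin d → Bool) → ℕ}
    (h : PebbleStep (cube d) C C') :
    ∑ v, C' v * 2 ^ hammingDist v z ≤ ∑ v, C v * 2 ^ hammingDist v z := by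
  obtain ⟨u, v, hadj, h2, hu, hv, hother⟩ := h
  have huv : u ≠ v := hadj.ne
  have hvmem : v ∈ (Finset.univ.erase u) := Finset.mem_erase.2 ⟨Ne.symm huv, Finset.mem_univ v⟩
  have key : ∀ f : (Fin d → Bool) → ℕ,
      ∑ x, f x = f u + (f v + ∑ x ∈ (Finset.univ.erase u).erase v, f x) := by
    intro f
    rw [Finset.add_sum_erase _ f hvmem, Finset.add_sum_erase _ f (Finset.mem_univ u)]
  rw [key (fun x => C' x * 2 ^ hammingDist x z), key (fun x => C x * 2 ^ hammingDist x z)]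
  have hrest : ∑ x ∈ (Finset.univ.erase u).erase v, C' x * 2 ^ hammingDist x z
      = ∑ x ∈ (Finset.univ.erase u).erase v, C x * 2 ^ hammingDist x z := by
    refine Finset.sum_congr rfl (fun x hx => ?_)
    have hx1 : x ≠ v := Finset.ne_of_mem_erase hx
    have hx2 : x ≠ u := Finset.ne_of_mem_erase (Finset.mem_of_mem_erase hx)
    rw [hother x hx2 hx1]
  rw [hrest]
  have hdist : hammingDist v z ≤ 1 + hammingDist u z := by
    have htri := hammingDist_triangle v u z
    have : hammingDist v u = 1 := by rw [hammingDist_comm]; exact hadj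
    omega
  have hw : 2 ^ hammingDist v z ≤ 2 * 2 ^ hammingDist u z := by
    calc 2 ^ hammingDist v z ≤ 2 ^ (1 + hammingDist u z) := Nat.pow_le_pow_right (by norm_num) hdist
    _ = 2 * 2 ^ hammingDist u z := by rw [pow_add]; ring
  have e1 : C' u * 2 ^ hammingDist u z + 2 * 2 ^ hammingDist u z = C u * 2 ^ hammingDist u z := by
    rw [hu, Nat.sub_mul]
    have h3 : 2 * 2 ^ hammingDist u z ≤ C u * 2 ^ hammingDist u z :=
      Nat.mul_le_mul_right _ h2
    omega
  have e2 : C' v * 2 ^ hammingDist v z = C v * 2 ^ hammingDist v z + 2 ^ hammingDist v z := by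
    rw [hv, Nat.add_mul, one_mul]
  omega

lemma rtg_potential {d : ℕ} (z : Fin d → Bool) {C C' : (Fin d → Bool) → ℕ}
    (h : Relation.ReflTransGen (PebbleStep (cube d)) C C') :
    ∑ v, C' v * 2 ^ hammingDist v z ≤ ∑ v, C v * 2 ^ hammingDist v z := by
  induction h with
  | refl => exact le_rfl
  | tail _ hstep ih => exact le_trans (potential_step z hstep) ih

lemma cube_lower {d m : ℕ} (hm : m < 3 ^ d)
    (h : ∀ C : (Fin d → Bool) → ℕ, (∑ v, C v) = m → Coverable (cube d) C) : False := by
  set z : Fin d → Bool := fun _ => false with hz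
  set C : (Fin d → Bool) → ℕ := fun v => if v = z then m else 0 with hC
  have hsum : ∑ v, C v = m := by
    simp only [hC]
    rw [Finset.sum_ite_eq' Finset.univ z (fun _ => m)]
    simp
  obtain ⟨C', hr, h1⟩ := h C hsum
  have hpot := rtg_potential z hr
  have hCpot : ∑ v, C v * 2 ^ hammingDist v z = m := by
    have : ∀ v, C v * 2 ^ hammingDist v z = if v = z then m else 0 := by
      intro v
      by_cases hv : v = z
      · subst hv; simp [hC, hammingDist_self]
      · simp [hC, hv]
    rw [Finset.sum_congr rfl (fun v _ => this v), Finset.sum_ite_eq' Finset.univ z (fun _ => m)]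
    simp
  have hC'pot : 3 ^ d ≤ ∑ v, C' v * 2 ^ hammingDist v z := by
    rw [← sum_pow_hamming d]
    refine Finset.sum_le_sum (fun v _ => ?_)
    have := h1 v
    calc 2 ^ hammingDist v z = 1 * 2 ^ hammingDist v z := (one_mul _).symm
    _ ≤ C' v * 2 ^ hammingDist v z := Nat.mul_le_mul_right _ this
  omega

lemma cube_upper : ∀ d (C : (Fin d → Bool) → ℕ), 3 ^ d ≤ ∑ v, C v → Coverable (cube d) C := by
  intro d
  induction d with
  | zero =>
    intro C h
    refine ⟨C, .refl, fun v => ?_⟩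
    have huniv : (Finset.univ : Finset (Fin 0 → Bool)) = {v} := by
      ext w
      simp only [Finset.mem_univ, Finset.mem_singleton, true_iff]
      exact Subsingleton.elim w v
    rw [huniv, Finset.sum_singleton] at h
    simpa using h
  | succ d ih =>
    intro C h
    set e := cubeSuccIso d with he
    have hA : Coverable (cube d □ Kbool) (C ∘ e.symm) := by
      refine prod_cover (3 ^ d) ?_ (fun A hA => ih A hA) _ ?_
      · rw [Fintype.card_fun]
        simp only [Fintype.card_fin, Fintype.card_bool]
        exact Nat.pow_le_pow_left (by norm_num) d
      · have : ∑ p, (C ∘ e.symm) p = ∑ v, C v := Equiv.sum_comp e.symm.toEquiv C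
        rw [this]
        calc 3 * 3 ^ d = 3 ^ (d + 1) := by rw [pow_succ]; ring
        _ ≤ ∑ v, C v := h
    have := coverable_map e.symm hA
    have heq : (C ∘ e.symm) ∘ e.symm.symm = C := by
      funext x; simp
    rwa [heq] at this

theorem gamma_cube (d : ℕ) : coverPebblingNumber (cube d) = 3 ^ d := by
  have hmem : 3 ^ d ∈ {m : ℕ | ∀ C : (Fin d → Bool) → ℕ, (∑ v, C v) = m → Coverable (cube d) C} :=
    fun C hsum => cube_upper d C (le_of_eq hsum.symm)
  refine le_antisymm (Nat.sInf_le hmem) (le_csInf ⟨3 ^ d, hmem⟩ (fun m hm => ?_))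
  by_contra hc
  push_neg at hc
  exact cube_lower hc hm

end Main

open SimpleGraph in
/-- The cover pebbling number of hypercubes is multiplicative over Cartesian
products: `γ(Q^{a+b}) = γ(Q^a) · γ(Q^b)`; in particular, the cover-pebbling
analogue of Graham's conjecture `γ(G □ H) ≤ γ(G) · γ(H)` holds when `G` and
`H` are hypercubes. -/
theorem cover_pebbling_cube_mul (a b : ℕ) :
    coverPebblingNumber (cube (a + b))
        = coverPebblingNumber (cube a) * coverPebblingNumber (cube b) ∧
    coverPebblingNumber (cube a □ cube b)
        ≤ coverPebblingNumber (cube a) * coverPebblingNumber (cube b) := by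
  have h1 : coverPebblingNumber (cube a □ cube b) = coverPebblingNumber (cube (a + b)) :=
    coverPebblingNumber_congr (cubeAddIso a b)
  constructor
  · rw [gamma_cube, gamma_cube, gamma_cube, pow_add]
  · rw [h1, gamma_cube, gamma_cube, gamma_cube, pow_add]
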